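/- Let β ∈ (0,1), ν > 0, and let r ≥ 1 be an integer. Then for every s > 0, ∫₀^∞ e^{−st} · e^{−tν} ∑_{m=0}^∞ ν^m t^{βr+m} M^r_{β, βr+m+1}(ν^β t^β) dt = 1 / (s((s+ν)^β − ν^β)^r); that is, the Laplace transform of t ↦ e^{−tν} ∑_{m=0}^∞ ν^m t^{βr+m} M^r_{β, βr+m+1}(ν^β t^β) equals s^{−1}((s+ν)^β − ν^β)^{−r}. -/

import Mathlib

open scoped BigOperators

/-- The generalized (Prabhakar) Mittag-Leffler function
`M^c_{a,b}(z) = ∑_{n=0}^∞ (c)_n z^n / (n! Γ(an+b))`, where `(c)_n = ∏_{i<n} (c+i)`. -/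
noncomputable def prabhakar (a b c : ℝ) (z : ℝ) : ℝ :=
  ∑' n : ℕ, (∏ i ∈ Finset.range n, (c + i)) * z ^ n / (n.factorial * Real.Gamma (a * n + b))


open MeasureTheory Set in
private lemma prod_range_cast_ascFactorial (r n : ℕ) :
    (∏ i ∈ Finset.range n, ((r : ℝ) + i)) = (r.ascFactorial n : ℝ) := by
  induction n with
  | zero => simp
  | succ n ih => rw [Finset.prod_range_succ, ih, Nat.ascFactorial_succ]; push_cast; ring

open MeasureTheory Set in
private lemma integrableOn_rpow_mul_exp_neg_mul' {a p : ℝ} (ha : 0 < a) (hp : 0 < p) :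
    IntegrableOn (fun t : ℝ => t ^ (a - 1) * Real.exp (-(p * t))) (Set.Ioi 0) := by
  have h := integrableOn_rpow_mul_exp_neg_mul_rpow (by linarith : (-1:ℝ) < a - 1) zero_lt_one hp
  refine h.congr_fun (fun x hx => ?_) measurableSet_Ioi
  dsimp only
  rw [Real.rpow_one, neg_mul]

open MeasureTheory Set in
/-- The Laplace transform identity:
`∫₀^∞ e^{−st} e^{−tν} ∑_{m=0}^∞ ν^m t^{βr+m} M^r_{β,βr+m+1}(ν^β t^β) dt
  = 1 / (s((s+ν)^β − ν^β)^r)`. -/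
theorem laplace_transform_tempered_mittagLeffler_series
    (β ν : ℝ) (hβ : β ∈ Set.Ioo (0 : ℝ) 1) (hν : 0 < ν) (r : ℕ) (hr : 1 ≤ r)
    (s : ℝ) (hs : 0 < s) :
    (∫ t in Set.Ioi (0 : ℝ),
        Real.exp (-(s * t)) * (Real.exp (-(t * ν)) *
          ∑' m : ℕ, ν ^ m * t ^ (β * r + m) * prabhakar β (β * r + m + 1) r (ν ^ β * t ^ β))) =
      1 / (s * ((s + ν) ^ β - ν ^ β) ^ r) := by
  obtain ⟨hβ0, hβ1⟩ := hβ
  obtain ⟨k, hk⟩ : ∃ k, r = k + 1 := ⟨r - 1, by omega⟩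
  set p : ℝ := s + ν with hpdef
  have hp0 : 0 < p := by rw [hpdef]; linarith
  have hνp : ν < p := by rw [hpdef]; linarith
  have hD : 0 < p ^ β - ν ^ β := sub_pos.2 (Real.rpow_lt_rpow hν.le hνp hβ0)
  set x : ℝ := ν / p with hxdef
  have hx0 : 0 < x := div_pos hν hp0
  have hx1 : x < 1 := (div_lt_one hp0).2 hνp
  set y : ℝ := x ^ β with hydef
  have hy0 : 0 < y := Real.rpow_pos_of_pos hx0 β
  have hy1 : y < 1 := Real.rpow_lt_one hx0.le hx1 hβ0
  have hynorm : ‖y‖ < 1 := by rw [Real.norm_eq_abs, abs_of_pos hy0]; exact hy1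
  set K : ℝ := (1 / p) ^ (β * (r : ℝ) + 1) with hKdef
  have hK0 : 0 ≤ K := Real.rpow_nonneg (by positivity) _
  set T : ℝ := 1 / (s * (p ^ β - ν ^ β) ^ r) with hTdef
  have hT0 : 0 ≤ T := by
    have : 0 < s * (p ^ β - ν ^ β) ^ r := mul_pos hs (pow_pos hD r)
    exact le_of_lt (by rw [hTdef]; positivity)
  -- the summand family
  set f : ℕ × ℕ → ℝ → ℝ := fun q t =>
    (Real.exp (-(s * t)) * (Real.exp (-(t * ν)) * (ν ^ q.1 * t ^ (β * (r : ℝ) + q.1)))) *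
      ((∏ i ∈ Finset.range q.2, ((r : ℝ) + i)) * (ν ^ β * t ^ β) ^ q.2 /
        (q.2.factorial * Real.Gamma (β * q.2 + (β * (r : ℝ) + q.1 + 1)))) with hfdef
  set a : ℕ × ℕ → ℝ := fun q => β * (r : ℝ) + q.1 + β * q.2 + 1 with hadef
  have hbr : 0 ≤ β * (r : ℝ) := mul_nonneg hβ0.le (Nat.cast_nonneg r)
  have ha0 : ∀ q : ℕ × ℕ, 0 < a q := by
    intro q
    have h1 : 0 ≤ β * (q.2 : ℝ) := mul_nonneg hβ0.le (Nat.cast_nonneg _)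
    have h2 : 0 ≤ (q.1 : ℝ) := Nat.cast_nonneg _
    simp only [hadef]; linarith
  have hΓpos : ∀ q : ℕ × ℕ, 0 < Real.Gamma (β * q.2 + (β * (r : ℝ) + q.1 + 1)) := by
    intro q
    have h1 : 0 ≤ β * (q.2 : ℝ) := mul_nonneg hβ0.le (Nat.cast_nonneg _)
    have h2 : 0 ≤ (q.1 : ℝ) := Nat.cast_nonneg _
    exact Real.Gamma_pos_of_pos (by linarith)
  have hprodnn : ∀ n : ℕ, 0 ≤ ∏ i ∈ Finset.range n, ((r : ℝ) + i) :=
    fun n => Finset.prod_nonneg fun i _ => by positivity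
  set I1 : ℕ × ℕ → ℝ := fun q =>
    ν ^ q.1 * ((∏ i ∈ Finset.range q.2, ((r : ℝ) + i)) * ν ^ (β * q.2) /
      (q.2.factorial * Real.Gamma (β * q.2 + (β * (r : ℝ) + q.1 + 1)))) with hI1def
  have hI1nn : ∀ q, 0 ≤ I1 q := by
    intro q
    refine mul_nonneg (pow_nonneg hν.le _) (div_nonneg
      (mul_nonneg (hprodnn q.2) (Real.rpow_nonneg hν.le _))
      (mul_nonneg (Nat.cast_nonneg _) (hΓpos q).le))
  have hfeq : ∀ q : ℕ × ℕ, ∀ t ∈ Set.Ioi (0 : ℝ),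
      f q t = I1 q * (t ^ (a q - 1) * Real.exp (-(p * t))) := by
    intro q t ht
    have ht0 : (0 : ℝ) < t := ht
    have h1 : (ν ^ β * t ^ β) ^ q.2 = ν ^ (β * (q.2 : ℝ)) * t ^ (β * (q.2 : ℝ)) := by
      rw [mul_pow, ← Real.rpow_natCast (ν ^ β) q.2, ← Real.rpow_natCast (t ^ β) q.2,
        ← Real.rpow_mul hν.le, ← Real.rpow_mul ht0.le]
    have h2 : Real.exp (-(s * t)) * Real.exp (-(t * ν)) = Real.exp (-(p * t)) := by
      rw [← Real.exp_add, hpdef]; ring_nf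
    have h3 : t ^ (β * (r : ℝ) + q.1) * t ^ (β * (q.2 : ℝ)) = t ^ (a q - 1) := by
      rw [← Real.rpow_add ht0]
      congr 1
      simp only [hadef]; ring
    calc f q t
        = (Real.exp (-(s * t)) * Real.exp (-(t * ν))) *
            ((t ^ (β * (r : ℝ) + q.1) * t ^ (β * (q.2 : ℝ))) * I1 q) := by
          simp only [hfdef, hI1def]; rw [h1]; ring
      _ = I1 q * (t ^ (a q - 1) * Real.exp (-(p * t))) := by rw [h2, h3]; ring
  have hint : ∀ q : ℕ × ℕ, IntegrableOn (f q) (Set.Ioi 0) := by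
    intro q
    have h : IntegrableOn (fun t : ℝ => I1 q * (t ^ (a q - 1) * Real.exp (-(p * t))))
        (Set.Ioi 0) := (integrableOn_rpow_mul_exp_neg_mul' (ha0 q) hp0).const_mul (I1 q)
    exact h.congr_fun (fun t ht => (hfeq q t ht).symm) measurableSet_Ioi
  have hIval : ∀ q : ℕ × ℕ, (∫ t in Set.Ioi (0 : ℝ), f q t) =
      K * (x ^ q.1 * (((q.2 + k).choose k : ℝ) * y ^ q.2)) := by
    intro q
    rw [setIntegral_congr_fun measurableSet_Ioi (hfeq q), integral_const_mul,
      Real.integral_rpow_mul_exp_neg_mul_Ioi (ha0 q) hp0]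
    have hΓ : Real.Gamma (a q) = Real.Gamma (β * q.2 + (β * (r : ℝ) + q.1 + 1)) := by
      congr 1; simp only [hadef]; ring
    have e1 : (1 / p : ℝ) ^ (a q) =
        K * ((1 / p) ^ (q.1 : ℝ) * (1 / p) ^ (β * (q.2 : ℝ))) := by
      rw [hKdef, ← Real.rpow_add (by positivity), ← Real.rpow_add (by positivity)]
      congr 1
      simp only [hadef]; ring
    have e2 : (1 / p : ℝ) ^ (q.1 : ℝ) = (1 / p) ^ q.1 := Real.rpow_natCast _ _
    have e3 : x ^ q.1 = ν ^ q.1 * (1 / p) ^ q.1 := by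
      rw [← mul_pow, mul_one_div, hxdef]
    have e4 : y ^ q.2 = ν ^ (β * (q.2 : ℝ)) * (1 / p) ^ (β * (q.2 : ℝ)) := by
      rw [← Real.mul_rpow hν.le (by positivity), mul_one_div, ← hxdef, hydef,
        ← Real.rpow_natCast (x ^ β) q.2, ← Real.rpow_mul hx0.le]
    have e5 : (∏ i ∈ Finset.range q.2, ((r : ℝ) + i)) =
        (q.2.factorial : ℝ) * (((q.2 + k).choose k : ℝ)) := by
      have h : r.ascFactorial q.2 = q.2.factorial * ((q.2 + k).choose k) := by
        rw [hk, Nat.ascFactorial_eq_factorial_mul_choose]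
        congr 1
        rw [Nat.add_comm k q.2, Nat.choose_symm_add]
      rw [prod_range_cast_ascFactorial, h]
      push_cast; ring
    simp only [hI1def]
    rw [hΓ, e1, e2, e3, e4, e5]
    have hΓne : Real.Gamma (β * q.2 + (β * (r : ℝ) + q.1 + 1)) ≠ 0 := (hΓpos q).ne'
    have hfac : (q.2.factorial : ℝ) ≠ 0 := Nat.cast_ne_zero.2 q.2.factorial_pos.ne'
    field_simp
  -- sums
  have hsum1 : Summable fun m : ℕ => x ^ m := summable_geometric_of_lt_one hx0.le hx1
  have hsum2 : Summable fun n : ℕ => ((n + k).choose k : ℝ) * y ^ n :=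
    summable_choose_mul_geometric_of_norm_lt_one k hynorm
  -- constant identity
  have hTval : K * ((1 - x)⁻¹ * (1 / (1 - y) ^ (k + 1))) = T := by
    have hppow : (0 : ℝ) < p ^ β := Real.rpow_pos_of_pos hp0 β
    have h1x : (1 - x) = s / p := by
      rw [hxdef]; field_simp; rw [hpdef]; ring
    have h1y : (1 - y) = (p ^ β - ν ^ β) / p ^ β := by
      rw [hydef, hxdef, Real.div_rpow hν.le hp0.le]
      field_simp
    have hpow : K = 1 / (p ^ (β * (r : ℝ)) * p) := by
      have hinv : ((1 : ℝ) / p) ^ (β * (r : ℝ)) = (p ^ (β * (r : ℝ)))⁻¹ := by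
        rw [one_div, Real.inv_rpow hp0.le]
      rw [hKdef, Real.rpow_add (by positivity), Real.rpow_one, hinv]
      field_simp
    have hpbr : p ^ (β * (r : ℝ)) = (p ^ β) ^ r := by
      rw [Real.rpow_mul hp0.le, Real.rpow_natCast]
    rw [hpow, h1x, h1y, hpbr, div_pow, hTdef, ← hk]
    have h1 : ((p ^ β) ^ r : ℝ) ≠ 0 := (pow_pos hppow r).ne'
    have h2 : ((p ^ β - ν ^ β) ^ r : ℝ) ≠ 0 := (pow_pos hD r).ne'
    field_simp
  -- measurability
  have hmeasf : ∀ q : ℕ × ℕ, Measurable fun t => ENNReal.ofReal (f q t) := by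
    intro q
    apply Measurable.ennreal_ofReal
    simp only [hfdef]
    have hc1 : Continuous fun t : ℝ => t ^ (β * (r : ℝ) + q.1) :=
      Real.continuous_rpow_const (by have := (Nat.cast_nonneg q.1 : (0:ℝ) ≤ q.1); linarith)
    have hc2 : Continuous fun t : ℝ => t ^ β := Real.continuous_rpow_const hβ0.le
    have he1 : Continuous fun t : ℝ => Real.exp (-(s * t)) :=
      Real.continuous_exp.comp (continuous_const.mul continuous_id).neg
    have he2 : Continuous fun t : ℝ => Real.exp (-(t * ν)) :=
      Real.continuous_exp.comp (continuous_id.mul continuous_const).neg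
    exact ((he1.mul (he2.mul (continuous_const.mul hc1))).mul
      ((continuous_const.mul ((continuous_const.mul hc2).pow q.2)).div_const _)).measurable
  have hfnn : ∀ q : ℕ × ℕ, ∀ t ∈ Set.Ioi (0 : ℝ), 0 ≤ f q t := by
    intro q t ht
    rw [hfeq q t ht]
    exact mul_nonneg (hI1nn q) (mul_nonneg (Real.rpow_nonneg (le_of_lt ht) _) (Real.exp_pos _).le)
  -- lintegral of each piece
  have hlint : ∀ q : ℕ × ℕ, (∫⁻ t in Set.Ioi (0 : ℝ), ENNReal.ofReal (f q t)) =
      ENNReal.ofReal (K * (x ^ q.1 * (((q.2 + k).choose k : ℝ) * y ^ q.2))) := by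
    intro q
    rw [← ofReal_integral_eq_lintegral_ofReal (hint q) ?_, hIval q]
    filter_upwards [ae_restrict_mem measurableSet_Ioi] with t ht using hfnn q t ht
  -- total lintegral
  have key : (∫⁻ t in Set.Ioi (0 : ℝ), ∑' q : ℕ × ℕ, ENNReal.ofReal (f q t)) =
      ENNReal.ofReal T := by
    rw [lintegral_tsum fun q => (hmeasf q).aemeasurable]
    have step1 : ∀ q : ℕ × ℕ, (∫⁻ t in Set.Ioi (0 : ℝ), ENNReal.ofReal (f q t)) =
        ENNReal.ofReal K * (ENNReal.ofReal (x ^ q.1) *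
          ENNReal.ofReal (((q.2 + k).choose k : ℝ) * y ^ q.2)) := by
      intro q
      rw [hlint q, ENNReal.ofReal_mul hK0, ENNReal.ofReal_mul (pow_nonneg hx0.le _)]
    rw [tsum_congr step1, ENNReal.tsum_mul_left, ENNReal.tsum_prod']
    simp_rw [ENNReal.tsum_mul_left, ENNReal.tsum_mul_right]
    rw [← ENNReal.ofReal_tsum_of_nonneg (fun m => pow_nonneg hx0.le m) hsum1,
      tsum_geometric_of_lt_one hx0.le hx1,
      ← ENNReal.ofReal_tsum_of_nonneg
        (fun n => mul_nonneg (Nat.cast_nonneg _) (pow_nonneg hy0.le n)) hsum2,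
      tsum_choose_mul_geometric_of_norm_lt_one k hynorm,
      ← ENNReal.ofReal_mul (inv_nonneg.2 (by linarith)),
      ← ENNReal.ofReal_mul hK0, hTval]
  have hne : (∫⁻ t in Set.Ioi (0 : ℝ), ∑' q : ℕ × ℕ, ENNReal.ofReal (f q t)) ≠ ⊤ := by
    rw [key]; exact ENNReal.ofReal_ne_top
  have haes : ∀ᵐ t ∂(volume.restrict (Set.Ioi (0 : ℝ))),
      (∑' q : ℕ × ℕ, ENNReal.ofReal (f q t)) < ⊤ :=
    ae_lt_top (Measurable.ennreal_tsum hmeasf) hne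
  -- a.e. identification of the integrand
  have hgae : (fun t => Real.exp (-(s * t)) * (Real.exp (-(t * ν)) *
        ∑' m : ℕ, ν ^ m * t ^ (β * (r : ℝ) + m) * prabhakar β (β * (r : ℝ) + m + 1) r
          (ν ^ β * t ^ β)))
      =ᵐ[volume.restrict (Set.Ioi (0 : ℝ))]
      fun t => (∑' q : ℕ × ℕ, ENNReal.ofReal (f q t)).toReal := by
    filter_upwards [haes, ae_restrict_mem measurableSet_Ioi] with t hlt ht
    have hsumf : Summable fun q : ℕ × ℕ => f q t := by
      have h1 : Summable fun q : ℕ × ℕ => (ENNReal.ofReal (f q t)).toReal :=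
        ENNReal.summable_toReal hlt.ne
      exact h1.congr fun q => ENNReal.toReal_ofReal (hfnn q t ht)
    have htsum : (∑' q : ℕ × ℕ, ENNReal.ofReal (f q t)).toReal = ∑' q : ℕ × ℕ, f q t := by
      rw [← ENNReal.ofReal_tsum_of_nonneg (fun q => hfnn q t ht) hsumf,
        ENNReal.toReal_ofReal (tsum_nonneg fun q => hfnn q t ht)]
    rw [htsum, Summable.tsum_prod hsumf]
    have inner : ∀ m : ℕ, (∑' n : ℕ, f (m, n) t) =
        Real.exp (-(s * t)) * (Real.exp (-(t * ν)) *
          (ν ^ m * t ^ (β * (r : ℝ) + m) * prabhakar β (β * (r : ℝ) + m + 1) r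
            (ν ^ β * t ^ β))) := by
      intro m
      simp only [hfdef]
      rw [tsum_mul_left, prabhakar]
      ring
    rw [tsum_congr inner, tsum_mul_left, tsum_mul_left]
  -- conclusion
  rw [integral_congr_ae hgae,
    integral_toReal (Measurable.ennreal_tsum hmeasf).aemeasurable haes, key,
    ENNReal.toReal_ofReal hT0]
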